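/- Under the bijection between P–1_n multichains of length k and shifted tableaux T of shape λ(P) with max(T) ≤ k (for P of length n starting with d), a multichain is a chain (all inequalities strict) if and only if the set of entries of the corresponding tableau is exactly the interval {1, 2, …, k}. -/

import Mathlib

open Finset

/-- The `x`-th step (1-indexed) of a binary path `P` of length `n`;
`true` denotes an upstep `u`, `false` a downstep `d`. -/
def stp (n : ℕ) (P : Fin n → Bool) (x : ℕ) : Bool :=
  if h : 1 ≤ x ∧ x ≤ n then P ⟨x - 1, by omega⟩ else true

/-- The height of the `x`-th lattice point of the path (the partial sum of `±1`'s). -/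
def ht (n : ℕ) (P : Fin n → Bool) (x : ℕ) : ℤ :=
  ∑ j ∈ Finset.Icc 1 x, (if stp n P j then (1 : ℤ) else -1)

/-- The order on binary paths: `P ≤ Q` iff every height of `P` is at most that of `Q`. -/
def pLE (n : ℕ) (P Q : Fin n → Bool) : Prop := ∀ x ≤ n, ht n P x ≤ ht n Q x

def pLT (n : ℕ) (P Q : Fin n → Bool) : Prop := pLE n P Q ∧ ¬ pLE n Q P

/-- `Q` covers `P` in the lattice of binary paths. -/
def covers (n : ℕ) (P Q : Fin n → Bool) : Prop :=
  pLT n P Q ∧ ∀ R, pLT n P R → ¬ pLT n R Q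

/-- The `x`-th point of `P` is a valley: last point of a maximal run of downsteps. -/
def valley (n : ℕ) (P : Fin n → Bool) (x : ℕ) : Prop :=
  1 ≤ x ∧ x ≤ n ∧ stp n P x = false ∧ (x = n ∨ stp n P (x + 1) = true)

/-- The maximum path `1_n = u^n`. -/
def pTop (n : ℕ) : Fin n → Bool := fun _ => true

/-- The minimum path `0_n = d^n`. -/
def pBot (n : ℕ) : Fin n → Bool := fun _ => false

/-- The set of positions of downsteps of `P`. -/
def dsteps (n : ℕ) (P : Fin n → Bool) : Finset (Fin n) :=
  Finset.univ.filter fun j => P j = false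

/-- `m(P) = |P|_d`, the number of downsteps of `P`. -/
def nd (n : ℕ) (P : Fin n → Bool) : ℕ := (dsteps n P).card

/-- The 0-indexed position of the `(i+1)`-st downstep of `P`. -/
def dpos (n : ℕ) (P : Fin n → Bool) (i : Fin (nd n P)) : ℕ :=
  (((dsteps n P).orderIsoOfFin rfl i : {x // x ∈ dsteps n P}) : Fin n)

/-- The part `λ_{i+1} = n − (i+1) − k_{i+1} + 1` of the strict partition `λ(P)`;
since `k_{i+1} = dpos i − i`, this equals `n − dpos i`. -/
def lam (n : ℕ) (P : Fin n → Bool) (i : Fin (nd n P)) : ℕ := n - dpos n P i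

/-- The shifted diagram `F(P)` of shape `λ(P)`, as the set of (1-indexed) cells
`(i, j)` with `i ∈ [m]`, `i ≤ j ≤ λ_i + i − 1`. -/
def F (n : ℕ) (P : Fin n → Bool) : Set (ℕ × ℕ) :=
  {c | ∃ i : Fin (nd n P),
    c.1 = (i : ℕ) + 1 ∧ (i : ℕ) + 1 ≤ c.2 ∧ c.2 ≤ lam n P i + (i : ℕ)}

/-- The `x`-coordinate `n + i − j` of the lattice point of cell `c = (i,j)`. -/
def cellX (n : ℕ) (c : ℕ × ℕ) : ℕ := n + c.1 - c.2

/-- The `y`-coordinate `n − i − j` of the lattice point of cell `c = (i,j)`. -/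
def cellY (n : ℕ) (c : ℕ × ℕ) : ℤ := (n : ℤ) - c.1 - c.2

/-- A shifted tableau of shape `λ(P)`: positive entries, weakly increasing along
rows and columns. -/
def isTab (n : ℕ) (P : Fin n → Bool) (T : {c : ℕ × ℕ // c ∈ F n P} → ℕ) : Prop :=
  (∀ c, 0 < T c) ∧
  (∀ c c' : {c : ℕ × ℕ // c ∈ F n P},
    c.1.1 = c'.1.1 → c.1.2 + 1 = c'.1.2 → T c ≤ T c') ∧
  (∀ c c' : {c : ℕ × ℕ // c ∈ F n P},
    c.1.1 + 1 = c'.1.1 → c.1.2 = c'.1.2 → T c ≤ T c')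

/-- A shifted tableau is strictly increasing along rows and columns. -/
def isStrictTab (n : ℕ) (P : Fin n → Bool)
    (T : {c : ℕ × ℕ // c ∈ F n P} → ℕ) : Prop :=
  (∀ c c' : {c : ℕ × ℕ // c ∈ F n P},
    c.1.1 = c'.1.1 → c.1.2 + 1 = c'.1.2 → T c < T c') ∧
  (∀ c c' : {c : ℕ × ℕ // c ∈ F n P},
    c.1.1 + 1 = c'.1.1 → c.1.2 = c'.1.2 → T c < T c')

/-- A multichain `P = P_0 ≤ P_1 ≤ ⋯ ≤ P_k = u^n`. -/
def isMultichain (n k : ℕ) (P : Fin n → Bool)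
    (C : Fin (k + 1) → Fin n → Bool) : Prop :=
  (∀ i : Fin k, pLE n (C i.castSucc) (C i.succ)) ∧ C 0 = P ∧ C (Fin.last k) = pTop n

/-- The defining relation of the bijection: the entry at cell `(i,j)` is `k − ξ`
for the unique `ξ` with `h_{n+i−j}(P_ξ) ≤ n − i − j < h_{n+i−j}(P_{ξ+1})`. -/
def corr (n k : ℕ) (P : Fin n → Bool) (C : Fin (k + 1) → Fin n → Bool)
    (T : {c : ℕ × ℕ // c ∈ F n P} → ℕ) : Prop :=
  ∀ (c : {c : ℕ × ℕ // c ∈ F n P}) (ξ : ℕ) (hξ : ξ < k),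
    (T c = k - ξ ↔
      (ht n (C ⟨ξ, by omega⟩) (cellX n c.1) ≤ cellY n c.1 ∧
       cellY n c.1 < ht n (C ⟨ξ + 1, by omega⟩) (cellX n c.1)))

/-- Under the multichain–tableau correspondence, a multichain is a chain (all
inequalities strict) iff the set of entries of the tableau is exactly `{1, …, k}`. -/
-- downstep count among first x steps
def dc (n : ℕ) (P : Fin n → Bool) (x : ℕ) : ℕ :=
  ((Finset.Icc 1 x).filter (fun j => stp n P j = false)).card

lemma ht_eq_dc (n : ℕ) (P : Fin n → Bool) (x : ℕ) :
    ht n P x = (x : ℤ) - 2 * dc n P x := by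
  unfold ht dc
  have h1 : ∀ j ∈ Finset.Icc 1 x, (if stp n P j then (1:ℤ) else -1)
      = 1 - 2 * (if stp n P j = false then (1:ℤ) else 0) := by
    intro j _; cases h : stp n P j <;> simp [h]
  rw [Finset.sum_congr rfl h1, Finset.sum_sub_distrib, ← Finset.mul_sum,
      Finset.sum_boole, Finset.sum_const, Nat.card_Icc]
  push_cast
  ring

lemma ht_top (n x : ℕ) : ht n (pTop n) x = x := by
  unfold ht
  have h1 : ∀ j ∈ Finset.Icc 1 x, (if stp n (pTop n) j then (1:ℤ) else -1) = 1 := by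
    intro j _
    have : stp n (pTop n) j = true := by unfold stp pTop; split <;> rfl
    simp [this]
  rw [Finset.sum_congr rfl h1, Finset.sum_const, Nat.card_Icc]
  simp

lemma paths_eq (n : ℕ) (A B : Fin n → Bool)
    (h : ∀ x ≤ n, ht n A x = ht n B x) : A = B := by
  funext j
  have h1 := h j (by omega)
  have h2 := h ((j : ℕ) + 1) (by omega)
  unfold ht at h1 h2
  rw [Finset.sum_Icc_succ_top (by omega), Finset.sum_Icc_succ_top (by omega)] at h2
  have hs : (if stp n A ((j:ℕ)+1) then (1:ℤ) else -1)
      = (if stp n B ((j:ℕ)+1) then (1:ℤ) else -1) := by omega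
  have hA : stp n A ((j:ℕ)+1) = A j := by
    unfold stp; rw [dif_pos ⟨by omega, by omega⟩]
    exact congrArg A (Fin.ext (by simp))
  have hB : stp n B ((j:ℕ)+1) = B j := by
    unfold stp; rw [dif_pos ⟨by omega, by omega⟩]
    exact congrArg B (Fin.ext (by simp))
  rw [hA, hB] at hs
  cases hA' : A j <;> cases hB' : B j <;> simp [hA', hB'] at hs <;> rfl

lemma dc_eq (n : ℕ) (P : Fin n → Bool) (x : ℕ) (hx : x ≤ n) :
    dc n P x = ((dsteps n P).filter (fun a : Fin n => (a:ℕ) < x)).card := by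
  rw [dc, ← Finset.card_image_of_injective
    ((dsteps n P).filter (fun a : Fin n => (a:ℕ) < x)) (f := fun a : Fin n => (a:ℕ)+1)
    (by intro a b hab; simp only at hab; exact Fin.ext (by omega))]
  congr 1
  ext j
  simp only [Finset.mem_filter, Finset.mem_Icc, Finset.mem_image, dsteps,
    Finset.mem_univ, true_and]
  constructor
  · rintro ⟨⟨hj1, hj2⟩, hs⟩
    refine ⟨⟨j - 1, by omega⟩, ⟨?_, by simp; omega⟩, by simp; omega⟩
    rw [stp, dif_pos ⟨hj1, by omega⟩] at hs
    exact hs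
  · rintro ⟨a, ⟨ha, hax⟩, rfl⟩
    have han := a.isLt
    refine ⟨⟨by omega, by omega⟩, ?_⟩
    rw [stp, dif_pos ⟨by omega, by omega⟩]
    convert ha using 2
    exact Fin.ext (by simp)

lemma card_lt_orderEmb {α : Type*} [LinearOrder α] (s : Finset α) {m : ℕ}
    (h : s.card = m) (ι : Fin m) :
    (s.filter (fun a => a < s.orderEmbOfFin h ι)).card = ι := by
  have him : s.filter (fun a => a < s.orderEmbOfFin h ι)
      = Finset.image (s.orderEmbOfFin h) (Finset.Iio ι) := by
    ext a
    simp only [Finset.mem_filter, Finset.mem_image, Finset.mem_Iio]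
    constructor
    · rintro ⟨ha, hlt⟩
      have : a ∈ Set.range (s.orderEmbOfFin h) := by
        rw [Finset.range_orderEmbOfFin]; exact ha
      obtain ⟨j, rfl⟩ := this
      exact ⟨j, (s.orderEmbOfFin h).lt_iff_lt.mp hlt, rfl⟩
    · rintro ⟨j, hj, rfl⟩
      exact ⟨Finset.orderEmbOfFin_mem s h j, (s.orderEmbOfFin h).lt_iff_lt.mpr hj⟩
  rw [him, Finset.card_image_of_injective _ (s.orderEmbOfFin h).injective, Fin.card_Iio]

lemma dpos_lt (n : ℕ) (P : Fin n → Bool) (x D : ℕ) (hx : x ≤ n) (hD1 : 1 ≤ D)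
    (hD : D ≤ dc n P x) (hDm : D - 1 < nd n P) : dpos n P ⟨D-1, hDm⟩ < x := by
  by_contra hge
  push_neg at hge
  have hdc := dc_eq n P x hx
  have key := card_lt_orderEmb (dsteps n P) rfl (⟨D-1, hDm⟩ : Fin (nd n P))
  have hsub : (dsteps n P).filter (fun a : Fin n => (a:ℕ) < x) ⊆
      (dsteps n P).filter
        (fun a => a < (dsteps n P).orderEmbOfFin rfl ⟨D-1, hDm⟩) := by
    intro a ha
    simp only [Finset.mem_filter] at ha ⊢
    refine ⟨ha.1, ?_⟩
    have : (a : ℕ) < ((dsteps n P).orderEmbOfFin rfl ⟨D-1, hDm⟩ : Fin n) := by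
      have : x ≤ ((dsteps n P).orderEmbOfFin rfl ⟨D-1, hDm⟩ : Fin n) := hge
      omega
    exact this
  have hcard := Finset.card_le_card hsub
  replace hcard := hcard.trans_eq key
  simp only [] at hcard
  omega

lemma chainLE (n k : ℕ) (C : Fin (k + 1) → Fin n → Bool)
    (h : ∀ i : Fin k, pLE n (C i.castSucc) (C i.succ)) :
    ∀ (b : ℕ) (hb : b ≤ k) (a : ℕ) (hab : a ≤ b),
      pLE n (C ⟨a, by omega⟩) (C ⟨b, by omega⟩) := by
  intro b
  induction b with
  | zero =>
    intro hb a hab x hx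
    have : a = 0 := Nat.le_zero.mp hab
    subst this; exact le_refl _
  | succ m ih =>
    intro hb a hab x hx
    rcases Nat.lt_or_ge a (m + 1) with hlt | hge
    · have h1 := ih (by omega) a (by omega) x hx
      have h2 := h ⟨m, by omega⟩ x hx
      exact le_trans h1 h2
    · have : a = m + 1 := by omega
      subst this; exact le_refl _

theorem stmt16 (n k : ℕ) (P : Fin n → Bool) (hn : 0 < n)
    (hd : stp n P 1 = false) (hk : 0 < k)
    (C : Fin (k + 1) → Fin n → Bool) (hC : isMultichain n k P C)
    (T : {c : ℕ × ℕ // c ∈ F n P} → ℕ) (hT : isTab n P T ∧ ∀ c, T c ≤ k)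
    (hco : corr n k P C T) :
    (∀ i : Fin k, C i.castSucc ≠ C i.succ) ↔
    (∀ t, 1 ≤ t → t ≤ k → ∃ c, T c = t) := by
  obtain ⟨hmono, hC0, hCk⟩ := hC
  constructor
  · intro hchain t ht1 htk
    have hξ : k - t < k := by omega
    have hne := hchain ⟨k - t, hξ⟩
    have hle := hmono ⟨k - t, hξ⟩
    have hxE : ∃ x ≤ n, ht n (C (Fin.castSucc ⟨k - t, hξ⟩)) x
        < ht n (C (Fin.succ ⟨k - t, hξ⟩)) x := by
      by_contra hno
      push_neg at hno
      exact hne (paths_eq n _ _ (fun x hx => le_antisymm (hle x hx) (hno x hx)))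
    obtain ⟨x, hxn, hxs⟩ := hxE
    have hhA := ht_eq_dc n (C (Fin.castSucc ⟨k - t, hξ⟩)) x
    have hhB := ht_eq_dc n (C (Fin.succ ⟨k - t, hξ⟩)) x
    have hhP := ht_eq_dc n P x
    have htopx : ht n (C (Fin.succ ⟨k - t, hξ⟩)) x ≤ (x : ℤ) := by
      have h1 := chainLE n k C hmono k (le_refl k) (k - t + 1) (by omega) x hxn
      have e : (⟨k, by omega⟩ : Fin (k + 1)) = Fin.last k := rfl
      rw [e, hCk, ht_top] at h1
      exact h1
    have hPle : ht n P x ≤ ht n (C (Fin.castSucc ⟨k - t, hξ⟩)) x := by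
      have h1 := chainLE n k C hmono (k - t) (by omega) 0 (by omega) x hxn
      have e0 : (⟨0, by omega⟩ : Fin (k + 1)) = 0 := by ext; simp
      rw [e0, hC0] at h1
      exact h1
    generalize hDdef : dc n (C (Fin.castSucc ⟨k - t, hξ⟩)) x = D at hhA
    have hD1 : 1 ≤ D := by omega
    have hDP : D ≤ dc n P x := by omega
    have hdcnd : dc n P x ≤ nd n P := by
      rw [dc_eq n P x hxn]
      exact Finset.card_filter_le _ _
    have hDnd : D - 1 < nd n P := by omega
    have hdp := dpos_lt n P x D hxn hD1 hDP hDnd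
    have hcF : ((D, n - x + D) : ℕ × ℕ) ∈ F n P := by
      refine ⟨⟨D - 1, hDnd⟩, ?_, ?_, ?_⟩
      · show D = D - 1 + 1
        omega
      · show D - 1 + 1 ≤ n - x + D
        omega
      · show n - x + D ≤ lam n P ⟨D - 1, hDnd⟩ + (D - 1)
        have hlam : lam n P ⟨D - 1, hDnd⟩ = n - dpos n P ⟨D - 1, hDnd⟩ := rfl
        rw [hlam]
        omega
    have hcX : cellX n ((D, n - x + D) : ℕ × ℕ) = x := by
      simp only [cellX]
      omega
    have hcY : cellY n ((D, n - x + D) : ℕ × ℕ) = (x : ℤ) - 2 * D := by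
      simp only [cellY]
      omega
    refine ⟨⟨(D, n - x + D), hcF⟩, ?_⟩
    have hTc := (hco ⟨(D, n - x + D), hcF⟩ (k - t) hξ).mpr ?_
    · rw [hTc]
      omega
    · constructor
      · show ht n (C ⟨k - t, by omega⟩) (cellX n ((D, n - x + D) : ℕ × ℕ))
            ≤ cellY n ((D, n - x + D) : ℕ × ℕ)
        rw [hcX, hcY]
        exact le_of_eq hhA
      · show cellY n ((D, n - x + D) : ℕ × ℕ)
            < ht n (C ⟨k - t + 1, by omega⟩) (cellX n ((D, n - x + D) : ℕ × ℕ))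
        rw [hcX, hcY]
        calc (x : ℤ) - 2 * D = ht n (C (Fin.castSucc ⟨k - t, hξ⟩)) x := hhA.symm
          _ < ht n (C (Fin.succ ⟨k - t, hξ⟩)) x := hxs
  · intro hsur i hceq
    have hik := i.isLt
    obtain ⟨c, hc⟩ := hsur (k - (i : ℕ)) (by omega) (by omega)
    have h2 := (hco c (i : ℕ) i.isLt).mp hc
    obtain ⟨ha, hb⟩ := h2
    have ha' : ht n (C i.castSucc) (cellX n c.1) ≤ cellY n c.1 := ha
    have hb' : cellY n c.1 < ht n (C i.succ) (cellX n c.1) := hb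
    rw [hceq] at ha'
    exact absurd (lt_of_le_of_lt ha' hb') (lt_irrefl _)
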